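/- Let q ≥ 1 and let Z_1, …, Z_n be i.i.d. nonnegative real random variables in L^q. Then ‖Σ_{i=1}^n Z_i‖_{L^q} ≲_q n^{1/q}·‖Z_1‖_{L^q} + n·‖Z_1‖_{L^1}. -/

import Mathlib

open MeasureTheory ProbabilityTheory Finset
open scoped ENNReal

private lemma rpow_self_mul_self_sub_one {q : ℝ} (hq : 1 ≤ q) (x : ℝ≥0∞) :
    x ^ q = x * x ^ (q - 1) := by
  have hq0 : 0 < q := lt_of_lt_of_le one_pos hq
  rcases eq_or_lt_of_le hq with h | h
  · simp [← h]
  · have h0 : 0 < q - 1 := by linarith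
    rcases eq_or_ne x 0 with rfl | hx0
    · rw [ENNReal.zero_rpow_of_pos hq0, ENNReal.zero_rpow_of_pos h0, zero_mul]
    rcases eq_or_ne x ∞ with rfl | hxt
    · rw [ENNReal.top_rpow_of_pos hq0, ENNReal.top_rpow_of_pos h0, ENNReal.top_mul_top]
    · nth_rewrite 1 [show q = 1 + (q - 1) by ring]
      rw [ENNReal.rpow_add _ _ hx0 hxt, ENNReal.rpow_one]

private lemma add_rpow_le_two_rpow {r : ℝ} (hr : 0 ≤ r) (a b : ℝ≥0∞) :
    (a + b) ^ r ≤ 2 ^ r * (a ^ r + b ^ r) := by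
  have h1 : a + b ≤ 2 * (a ⊔ b) := by
    rw [two_mul]; exact add_le_add le_sup_left le_sup_right
  calc (a + b) ^ r ≤ (2 * (a ⊔ b)) ^ r := ENNReal.rpow_le_rpow h1 hr
    _ = 2 ^ r * (a ⊔ b) ^ r := ENNReal.mul_rpow_of_nonneg _ _ hr
    _ ≤ 2 ^ r * (a ^ r + b ^ r) := by
        gcongr
        rcases le_total a b with h | h
        · rw [sup_eq_right.2 h]; exact le_add_self
        · rw [sup_eq_left.2 h]; exact le_self_add

private lemma lintegral_rpow_sub_one_le {Ω : Type*} [MeasurableSpace Ω] (P : Measure Ω)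
    [IsProbabilityMeasure P] {q : ℝ} (hq : 1 ≤ q) {X : Ω → ℝ≥0∞} (hX : Measurable X) :
    ∫⁻ ω, X ω ^ (q - 1) ∂P ≤ (∫⁻ ω, X ω ^ q ∂P) ^ ((q - 1) / q) := by
  rcases eq_or_lt_of_le hq with h | h
  · simp [← h]
  · have hq0 : 0 < q := by linarith
    have h0 : 0 < q - 1 := by linarith
    have hpq : (q / (q - 1)).HolderConjugate q := by
      rw [Real.holderConjugate_iff]; constructor
      · rw [lt_div_iff₀ h0]; linarith
      · rw [inv_div]
        field_simp
        ring
    have hH := ENNReal.lintegral_mul_le_Lp_mul_Lq P hpq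
      ((hX.pow_const (q - 1)).aemeasurable) (aemeasurable_const (b := (1 : ℝ≥0∞)))
    simp only [Pi.mul_apply, mul_one, ENNReal.one_rpow, lintegral_one, measure_univ] at hH
    refine hH.trans (le_of_eq ?_)
    rw [one_div_div]
    congr 1
    apply lintegral_congr
    intro ω
    rw [← ENNReal.rpow_mul]
    congr 1
    rw [mul_comm, div_mul_eq_mul_div, mul_div_assoc, div_self (by linarith : q - 1 ≠ 0), mul_one]

private lemma iIndepFun_ae_congr {Ω ι : Type*} [MeasurableSpace Ω] {P : Measure Ω}
    {β : ι → Type*} {m : ∀ i, MeasurableSpace (β i)} {f g : ∀ i, Ω → β i}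
    (hf : iIndepFun (m := m) f P) (h : ∀ i, f i =ᵐ[P] g i) : iIndepFun (m := m) g P := by
  rw [iIndepFun_iff_measure_inter_preimage_eq_mul] at hf ⊢
  intro S sets hsets
  have h1 : ∀ i ∈ S, P (g i ⁻¹' sets i) = P (f i ⁻¹' sets i) := by
    intro i _
    apply measure_congr
    filter_upwards [h i] with ω hω
    refine eq_iff_iff.mpr ?_
    show g i ω ∈ sets i ↔ f i ω ∈ sets i
    rw [hω]
  have h2 : P (⋂ i ∈ S, g i ⁻¹' sets i) = P (⋂ i ∈ S, f i ⁻¹' sets i) := by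
    apply measure_congr
    have hall : ∀ᵐ ω ∂P, ∀ i ∈ S, f i ω = g i ω :=
      (ae_ball_iff S.countable_toSet).2 fun i _ => h i
    filter_upwards [hall] with ω hω
    refine eq_iff_iff.mpr ?_
    show (ω ∈ ⋂ i ∈ S, g i ⁻¹' sets i) ↔ ω ∈ ⋂ i ∈ S, f i ⁻¹' sets i
    simp only [Set.mem_iInter, Set.mem_preimage]
    constructor <;> intro hh i hi
    · rw [hω i hi]; exact hh i hi
    · rw [← hω i hi]; exact hh i hi
  rw [h2, hf S hsets]
  exact Finset.prod_congr rfl fun i hi => (h1 i hi).symm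

/-- Rosenthal's inequality for i.i.d. nonnegative variables: for every `q ≥ 1` there is
`C = C(q) > 0` such that for every i.i.d. family `Z_1, …, Z_n` of nonnegative random
variables in `L^q`, `‖Σ Z_i‖_{L^q} ≤ C·(n^{1/q}·‖Z_1‖_{L^q} + n·‖Z_1‖_{L^1})`. -/
theorem rosenthal_nonneg (q : ℝ) (hq : 1 ≤ q) :
    ∃ C > (0 : ℝ),
      ∀ {Ω : Type} [MeasurableSpace Ω] (P : Measure Ω) [IsProbabilityMeasure P]
        (n : ℕ) (Z : Fin n → Ω → ℝ),
        iIndepFun Z P →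
        (∀ i j, Measure.map (Z i) P = Measure.map (Z j) P) →
        (∀ i, MemLp (Z i) (ENNReal.ofReal q) P) →
        (∀ i, ∀ᵐ ω ∂P, 0 ≤ Z i ω) →
        ∀ i : Fin n,
          eLpNorm (fun ω => ∑ j, Z j ω) (ENNReal.ofReal q) P
            ≤ ENNReal.ofReal C *
              (ENNReal.ofReal ((n : ℝ) ^ (1 / q)) * eLpNorm (Z i) (ENNReal.ofReal q) P
                + (n : ℝ≥0∞) * eLpNorm (Z i) 1 P) := by
  have hq0 : 0 < q := lt_of_lt_of_le one_pos hq
  refine ⟨2 ^ q, by positivity, ?_⟩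
  intro Ω _ P _ n Z hindep hident hLq hpos i
  set p : ℝ≥0∞ := ENNReal.ofReal q with hp
  have hp_ne_zero : p ≠ 0 := by
    simp only [hp, Ne, ENNReal.ofReal_eq_zero, not_le]; exact hq0
  have hp_ne_top : p ≠ ∞ := ENNReal.ofReal_ne_top
  have hptoReal : p.toReal = q := ENNReal.toReal_ofReal hq0.le
  -- measurable modifications
  have hZaesm : ∀ j, AEStronglyMeasurable (Z j) P := fun j => (hLq j).1
  set Z' : Fin n → Ω → ℝ := fun j => (hZaesm j).mk (Z j) with hZ'
  have hZ'm : ∀ j, Measurable (Z' j) := fun j => (hZaesm j).stronglyMeasurable_mk.measurable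
  have hae : ∀ j, Z j =ᵐ[P] Z' j := fun j => (hZaesm j).ae_eq_mk
  set W : Fin n → Ω → ℝ≥0∞ := fun j ω => ENNReal.ofReal (Z' j ω) with hWdef
  have hWm : ∀ j, Measurable (W j) := fun j => ENNReal.measurable_ofReal.comp (hZ'm j)
  have haeW : ∀ j, (fun ω => ‖Z j ω‖ₑ) =ᵐ[P] W j := by
    intro j
    filter_upwards [hae j, hpos j] with ω h1 h2
    show ‖Z j ω‖ₑ = ENNReal.ofReal (Z' j ω)
    rw [Real.enorm_eq_ofReal h2, h1]
  have hindepW : iIndepFun W P := by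
    have h1 : iIndepFun Z' P := iIndepFun_ae_congr hindep hae
    exact h1.comp (fun _ => ENNReal.ofReal) (fun _ => ENNReal.measurable_ofReal)
  set S : Ω → ℝ≥0∞ := fun ω => ∑ j, W j ω with hS
  have hSm : Measurable S := Finset.measurable_sum _ fun j _ => hWm j
  have haeS : (fun ω => ‖∑ j, Z j ω‖ₑ) =ᵐ[P] S := by
    have hall : ∀ᵐ ω ∂P, ∀ j, Z j ω = Z' j ω ∧ 0 ≤ Z j ω :=
      ae_all_iff.2 fun j => (hae j).and (hpos j)
    filter_upwards [hall] with ω hω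
    have h0 : 0 ≤ ∑ j, Z j ω := Finset.sum_nonneg fun j _ => (hω j).2
    show ‖∑ j, Z j ω‖ₑ = ∑ j, ENNReal.ofReal (Z' j ω)
    rw [Real.enorm_eq_ofReal h0, ENNReal.ofReal_sum_of_nonneg fun j _ => (hω j).2]
    exact Finset.sum_congr rfl fun j _ => by rw [(hω j).1]
  set α := ∫⁻ ω, S ω ^ q ∂P with hα
  set μ1 := ∫⁻ ω, W i ω ∂P with hμ1
  set μq := ∫⁻ ω, W i ω ^ q ∂P with hμq
  -- identical distributions
  have hidW : ∀ (r : ℝ) (j : Fin n), ∫⁻ ω, W j ω ^ r ∂P = ∫⁻ ω, W i ω ^ r ∂P := by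
    intro r j
    have key : ∀ k : Fin n,
        ∫⁻ ω, W k ω ^ r ∂P = ∫⁻ x, ENNReal.ofReal x ^ r ∂(Measure.map (Z k) P) := by
      intro k
      have h1 : ∫⁻ x, ENNReal.ofReal x ^ r ∂(Measure.map (Z k) P)
          = ∫⁻ ω, ENNReal.ofReal (Z k ω) ^ r ∂P :=
        lintegral_map' ((ENNReal.measurable_ofReal.pow_const r).aemeasurable)
          ((hZaesm k).aemeasurable)
      have h2 : ∫⁻ ω, ENNReal.ofReal (Z k ω) ^ r ∂P = ∫⁻ ω, W k ω ^ r ∂P :=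
        lintegral_congr_ae (by filter_upwards [hae k] with ω h; simp only [hWdef, h])
      rw [h1, h2]
    rw [key j, key i, hident j i]
  have hident1 : ∀ j, ∫⁻ ω, W j ω ∂P = μ1 := by
    intro j
    have := hidW 1 j
    simpa [ENNReal.rpow_one] using this
  have hidentq : ∀ j, ∫⁻ ω, W j ω ^ q ∂P = μq := fun j => hidW q j
  set c : ℝ≥0∞ := (2 : ℝ≥0∞) ^ (q - 1) with hc
  have h2c : 2 * c = (2 : ℝ≥0∞) ^ q := by
    rw [hc]
    nth_rewrite 2 [show q = 1 + (q - 1) by ring]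
    rw [ENNReal.rpow_add _ _ (by norm_num) (by norm_num), ENNReal.rpow_one]
  -- the core self-bounding inequality
  have hcore : α ≤ c * ((n : ℝ≥0∞) * μ1 * α ^ ((q - 1) / q) + (n : ℝ≥0∞) * μq) := by
    have step1 : α = ∑ j, ∫⁻ ω, W j ω * S ω ^ (q - 1) ∂P := by
      rw [hα]
      calc ∫⁻ ω, S ω ^ q ∂P = ∫⁻ ω, ∑ j, W j ω * S ω ^ (q - 1) ∂P := by
            apply lintegral_congr
            intro ω
            rw [rpow_self_mul_self_sub_one hq (S ω)]
            nth_rewrite 1 [hS]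
            rw [← Finset.sum_mul]
        _ = ∑ j, ∫⁻ ω, W j ω * S ω ^ (q - 1) ∂P :=
            lintegral_finset_sum _ fun j _ => (hWm j).mul (hSm.pow_const _)
    have step2 : ∀ j, ∫⁻ ω, W j ω * S ω ^ (q - 1) ∂P ≤ c * (μ1 * α ^ ((q - 1) / q) + μq) := by
      intro j
      set T : Ω → ℝ≥0∞ := fun ω => ∑ k ∈ univ.erase j, W k ω with hT
      have hTapp : ∀ ω, T ω = ∑ k ∈ univ.erase j, W k ω := fun ω => rfl
      have hTm : Measurable T :=
        Finset.measurable_sum _ fun k _ => hWm k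
      have hST : ∀ ω, S ω = T ω + W j ω := by
        intro ω
        rw [hTapp ω, hS]
        exact (Finset.sum_erase_add _ _ (mem_univ j)).symm
      have hptwise : ∀ ω, W j ω * S ω ^ (q - 1)
          ≤ c * (W j ω * T ω ^ (q - 1) + W j ω ^ q) := by
        intro ω
        rw [hST ω]
        calc W j ω * (T ω + W j ω) ^ (q - 1)
            ≤ W j ω * (c * (T ω ^ (q - 1) + W j ω ^ (q - 1))) :=
              mul_le_mul_right (add_rpow_le_two_rpow (by linarith) _ _) _
          _ = c * (W j ω * T ω ^ (q - 1) + W j ω * W j ω ^ (q - 1)) := by ring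
          _ = c * (W j ω * T ω ^ (q - 1) + W j ω ^ q) := by
              rw [← rpow_self_mul_self_sub_one hq]
      have hint : ∫⁻ ω, W j ω * S ω ^ (q - 1) ∂P
          ≤ c * (∫⁻ ω, W j ω * T ω ^ (q - 1) ∂P + ∫⁻ ω, W j ω ^ q ∂P) := by
        calc ∫⁻ ω, W j ω * S ω ^ (q - 1) ∂P
            ≤ ∫⁻ ω, c * (W j ω * T ω ^ (q - 1) + W j ω ^ q) ∂P := lintegral_mono hptwise
          _ = c * (∫⁻ ω, W j ω * T ω ^ (q - 1) ∂P + ∫⁻ ω, W j ω ^ q ∂P) := by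
              rw [lintegral_const_mul c (f := fun ω => W j ω * T ω ^ (q - 1) + W j ω ^ q)
                  (((hWm j).mul (hTm.pow_const _)).add ((hWm j).pow_const q)),
                lintegral_add_left (f := fun ω => W j ω * T ω ^ (q - 1)) ((hWm j).mul (hTm.pow_const _))]
      have hindepTW : IndepFun T (W j) P := by
        have hfun : (∑ k ∈ univ.erase j, W k) = T := by
          funext ω
          simp [hT, Finset.sum_apply]
        have h := hindepW.indepFun_finsetSum_of_notMem hWm (Finset.notMem_erase j univ)
        rwa [hfun] at h
      have hindep2 : IndepFun (fun ω => T ω ^ (q - 1)) (W j) P :=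
        hindepTW.comp (measurable_id.pow_const (q - 1)) measurable_id
      have hmul : ∫⁻ ω, W j ω * T ω ^ (q - 1) ∂P
          = (∫⁻ ω, W j ω ∂P) * ∫⁻ ω, T ω ^ (q - 1) ∂P := by
        have h := lintegral_mul_eq_lintegral_mul_lintegral_of_indepFun
          (hWm j) (hTm.pow_const (q - 1)) hindep2.symm
        simpa [Pi.mul_apply] using h
      have hT_le : ∫⁻ ω, T ω ^ (q - 1) ∂P ≤ α ^ ((q - 1) / q) := by
        refine le_trans (lintegral_rpow_sub_one_le P hq hTm) ?_
        refine ENNReal.rpow_le_rpow ?_ (div_nonneg (by linarith) hq0.le)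
        refine lintegral_mono fun ω => ?_
        refine ENNReal.rpow_le_rpow ?_ hq0.le
        rw [hST ω]
        exact le_self_add
      refine hint.trans ?_
      rw [hmul, hident1 j, hidentq j]
      gcongr
    calc α = ∑ j, ∫⁻ ω, W j ω * S ω ^ (q - 1) ∂P := step1
      _ ≤ ∑ _j : Fin n, c * (μ1 * α ^ ((q - 1) / q) + μq) :=
          Finset.sum_le_sum fun j _ => step2 j
      _ = (n : ℝ≥0∞) * (c * (μ1 * α ^ ((q - 1) / q) + μq)) := by
          rw [Finset.sum_const, Finset.card_univ, Fintype.card_fin, nsmul_eq_mul]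
      _ = c * ((n : ℝ≥0∞) * μ1 * α ^ ((q - 1) / q) + (n : ℝ≥0∞) * μq) := by ring
  -- eLpNorm identities
  have hLHS : eLpNorm (fun ω => ∑ j, Z j ω) p P = α ^ (1 / q) := by
    rw [eLpNorm_eq_lintegral_rpow_enorm_toReal hp_ne_zero hp_ne_top, hptoReal]
    congr 1
    apply lintegral_congr_ae
    filter_upwards [haeS] with ω h
    rw [h]
  have hZqnorm : eLpNorm (Z i) p P = μq ^ (1 / q) := by
    rw [eLpNorm_eq_lintegral_rpow_enorm_toReal hp_ne_zero hp_ne_top, hptoReal]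
    congr 1
    apply lintegral_congr_ae
    filter_upwards [haeW i] with ω h
    rw [h]
  have hZ1norm : eLpNorm (Z i) 1 P = μ1 := by
    rw [eLpNorm_one_eq_lintegral_enorm]
    exact lintegral_congr_ae (haeW i)
  -- finiteness
  have hαfin : α ≠ ∞ := by
    have hsum : MemLp (fun ω => ∑ j, Z j ω) p P :=
      memLp_finsetSum univ fun j _ => hLq j
    have h1 : α ^ (1 / q) ≠ ∞ := hLHS ▸ hsum.eLpNorm_ne_top
    intro h
    rw [h, ENNReal.top_rpow_of_pos (by positivity)] at h1
    exact h1 rfl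
  have hC : ENNReal.ofReal ((2 : ℝ) ^ q) = (2 : ℝ≥0∞) ^ q := by
    rw [← ENNReal.ofReal_rpow_of_pos (by norm_num)]
    norm_num
  have hn : ENNReal.ofReal ((n : ℝ) ^ (1 / q)) = (n : ℝ≥0∞) ^ (1 / q) := by
    rw [← ENNReal.ofReal_rpow_of_nonneg (Nat.cast_nonneg n) (by positivity),
      ENNReal.ofReal_natCast]
  rw [hLHS, hZqnorm, hZ1norm, hC, hn]
  rcases eq_or_ne α 0 with h0 | h0
  · rw [h0, ENNReal.zero_rpow_of_pos (by positivity)]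
    exact zero_le
  by_cases hcase : α ≤ 2 * (c * ((n : ℝ≥0∞) * μq))
  · have hpow2 : ((2 : ℝ≥0∞) ^ q) ^ (1 / q) = 2 := by
      rw [← ENNReal.rpow_mul, mul_one_div, div_self hq0.ne', ENNReal.rpow_one]
    calc α ^ (1 / q) ≤ (2 * (c * ((n : ℝ≥0∞) * μq))) ^ (1 / q) :=
          ENNReal.rpow_le_rpow hcase (by positivity)
      _ = (2 * c) ^ (1 / q) * ((n : ℝ≥0∞) ^ (1 / q) * μq ^ (1 / q)) := by
          rw [← mul_assoc, ENNReal.mul_rpow_of_nonneg _ _ (by positivity),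
            ENNReal.mul_rpow_of_nonneg (n : ℝ≥0∞) _ (by positivity)]
      _ ≤ (2 : ℝ≥0∞) ^ q * ((n : ℝ≥0∞) ^ (1 / q) * μq ^ (1 / q)) := by
          gcongr
          rw [h2c, hpow2]
          calc (2 : ℝ≥0∞) = 2 ^ (1 : ℝ) := (ENNReal.rpow_one 2).symm
            _ ≤ 2 ^ q := ENNReal.rpow_le_rpow_of_exponent_le (by norm_num) hq
      _ ≤ (2 : ℝ≥0∞) ^ q * ((n : ℝ≥0∞) ^ (1 / q) * μq ^ (1 / q) + (n : ℝ≥0∞) * μ1) := by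
          gcongr
          exact le_self_add
  · push_neg at hcase
    have hhalf : c * ((n : ℝ≥0∞) * μq) ≤ α / 2 := by
      rw [ENNReal.le_div_iff_mul_le (Or.inl two_ne_zero) (Or.inl ENNReal.ofNat_ne_top), mul_comm]
      exact hcase.le
    have hstep : α ≤ c * ((n : ℝ≥0∞) * μ1 * α ^ ((q - 1) / q)) + α / 2 := by
      refine hcore.trans ?_
      rw [mul_add]
      gcongr
    have hfin2 : α / 2 ≠ ∞ :=
      (ENNReal.div_lt_top hαfin two_ne_zero).ne
    have hhalf2 : α / 2 ≤ c * ((n : ℝ≥0∞) * μ1 * α ^ ((q - 1) / q)) := by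
      have h := hstep
      nth_rewrite 1 [← ENNReal.add_halves α] at h
      exact (ENNReal.add_le_add_iff_right hfin2).1 h
    have hα_le : α ≤ 2 * c * ((n : ℝ≥0∞) * μ1) * α ^ ((q - 1) / q) := by
      have h := (ENNReal.div_le_iff_le_mul (Or.inl two_ne_zero)
        (Or.inl ENNReal.ofNat_ne_top)).1 hhalf2
      calc α ≤ c * ((n : ℝ≥0∞) * μ1 * α ^ ((q - 1) / q)) * 2 := h
        _ = 2 * c * ((n : ℝ≥0∞) * μ1) * α ^ ((q - 1) / q) := by ring
    set A := α ^ (1 / q) with hA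
    have hAq : A * A ^ (q - 1) = α := by
      rw [← rpow_self_mul_self_sub_one hq A, hA, ← ENNReal.rpow_mul,
        one_div_mul_cancel hq0.ne', ENNReal.rpow_one]
    have hexp : α ^ ((q - 1) / q) = A ^ (q - 1) := by
      rw [hA, ← ENNReal.rpow_mul]
      congr 1
      field_simp
    have hA_ne_top : A ≠ ∞ := ENNReal.rpow_ne_top_of_nonneg (by positivity) hαfin
    have hApos : A ≠ 0 := by
      rw [hA, Ne, ENNReal.rpow_eq_zero_iff]
      rintro (⟨h, _⟩ | ⟨h, _⟩)
      · exact h0 h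
      · exact hαfin h
    have hB_ne0 : A ^ (q - 1) ≠ 0 := by
      rw [Ne, ENNReal.rpow_eq_zero_iff]
      rintro (⟨h, _⟩ | ⟨_, h⟩)
      · exact hApos h
      · linarith
    have hB_ne_top : A ^ (q - 1) ≠ ∞ :=
      ENNReal.rpow_ne_top_of_nonneg (by linarith) hA_ne_top
    have hmul_le : A * A ^ (q - 1) ≤ 2 * c * ((n : ℝ≥0∞) * μ1) * A ^ (q - 1) := by
      rw [hAq]
      rw [hexp] at hα_le
      exact hα_le
    have hfinal : A ≤ 2 * c * ((n : ℝ≥0∞) * μ1) :=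
      (ENNReal.mul_le_mul_iff_left hB_ne0 hB_ne_top).1 hmul_le
    calc A ≤ 2 * c * ((n : ℝ≥0∞) * μ1) := hfinal
      _ = (2 : ℝ≥0∞) ^ q * ((n : ℝ≥0∞) * μ1) := by rw [h2c]
      _ ≤ (2 : ℝ≥0∞) ^ q * ((n : ℝ≥0∞) ^ (1 / q) * μq ^ (1 / q) + (n : ℝ≥0∞) * μ1) := by
          gcongr
          exact le_add_self
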